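/- Fix m > 0, E ∈ ℝ, and let Γ be the regularized four-degree-of-freedom rhomboidal Hamiltonian. At every point of the set 𝒜 = {Q₂ = Q₃ = P₂ = P₃ = 0} with Q₁ ≠ 0 or Q₄ ≠ 0, the partial derivatives ∂Γ/∂P₂, ∂Γ/∂P₃, ∂Γ/∂Q₂, ∂Γ/∂Q₃ all vanish; consequently the Hamiltonian vector field J∇Γ is tangent to 𝒜 (its components in the Q₂, Q₃, P₂, P₃ directions vanish on 𝒜), so 𝒜 is invariant under the regularized flow. -/

import Mathlib

open Matrix

noncomputable section

/-- The gradient of `f : (ι → ℝ) → ℝ` as the vector of partial derivatives. -/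
def grad {ι : Type*} [Fintype ι] [DecidableEq ι] (f : (ι → ℝ) → ℝ) (z : ι → ℝ) : ι → ℝ :=
  fun i => fderiv ℝ f z (Pi.single i 1)

/-- The standard `2n × 2n` symplectic matrix `[[0, I], [-I, 0]]`. -/
def Jmat (n : ℕ) : Matrix (Fin n ⊕ Fin n) (Fin n ⊕ Fin n) ℝ :=
  Matrix.fromBlocks 0 1 (-1) 0

/-- `ρ₁ = Q₁² + Q₂²`, in coordinates `(Q₁,Q₂,Q₃,Q₄,P₁,P₂,P₃,P₄)` with
`Qᵢ = z (Sum.inl (i-1))` and `Pᵢ = z (Sum.inr (i-1))`. -/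
def rho1 (z : (Fin 4 ⊕ Fin 4) → ℝ) : ℝ := (z (Sum.inl 0)) ^ 2 + (z (Sum.inl 1)) ^ 2

/-- `ρ₂ = Q₃² + Q₄²`. -/
def rho2 (z : (Fin 4 ⊕ Fin 4) → ℝ) : ℝ := (z (Sum.inl 2)) ^ 2 + (z (Sum.inl 3)) ^ 2

/-- `𝐐 = Q₁²Q₃Q₄ − Q₂²Q₃Q₄ − Q₁Q₂Q₃² + Q₁Q₂Q₄²`. -/
def QQ (z : (Fin 4 ⊕ Fin 4) → ℝ) : ℝ :=
  (z (Sum.inl 0)) ^ 2 * z (Sum.inl 2) * z (Sum.inl 3)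
    - (z (Sum.inl 1)) ^ 2 * z (Sum.inl 2) * z (Sum.inl 3)
    - z (Sum.inl 0) * z (Sum.inl 1) * (z (Sum.inl 2)) ^ 2
    + z (Sum.inl 0) * z (Sum.inl 1) * (z (Sum.inl 3)) ^ 2

/-- The regularized four-degree-of-freedom rhomboidal Hamiltonian in extended
phase space, with mass parameter `m` and energy parameter `E`. -/
def Gamma4 (m E : ℝ) (z : (Fin 4 ⊕ Fin 4) → ℝ) : ℝ :=
  (rho2 z / 16) * ((z (Sum.inr 0)) ^ 2 + (z (Sum.inr 1)) ^ 2)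
    + (rho1 z / (16 * m)) * ((z (Sum.inr 2)) ^ 2 + (z (Sum.inr 3)) ^ 2)
    - rho2 z / 2 - m ^ 2 * rho1 z / 2
    - 2 * m * rho1 z * rho2 z *
        (1 / Real.sqrt ((rho1 z) ^ 2 + (rho2 z) ^ 2 - 4 * QQ z)
          + 1 / Real.sqrt ((rho1 z) ^ 2 + (rho2 z) ^ 2 + 4 * QQ z))
    - E * rho1 z * rho2 z

/-- The reflection negating `Q₂, Q₃, P₂, P₃`. -/
def eps : (Fin 4 ⊕ Fin 4) → ℝ := fun i =>
  if i = Sum.inl 1 ∨ i = Sum.inl 2 ∨ i = Sum.inr 1 ∨ i = Sum.inr 2 then -1 else 1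

def sigmaA : ((Fin 4 ⊕ Fin 4) → ℝ) →L[ℝ] ((Fin 4 ⊕ Fin 4) → ℝ) :=
  ContinuousLinearMap.pi fun i => eps i • ContinuousLinearMap.proj i

lemma sigmaA_apply (w : (Fin 4 ⊕ Fin 4) → ℝ) (i : Fin 4 ⊕ Fin 4) :
    sigmaA w i = eps i * w i := rfl

lemma rho1_sigmaA (w : (Fin 4 ⊕ Fin 4) → ℝ) : rho1 (sigmaA w) = rho1 w := by
  simp [rho1, sigmaA_apply, eps]

lemma rho2_sigmaA (w : (Fin 4 ⊕ Fin 4) → ℝ) : rho2 (sigmaA w) = rho2 w := by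
  simp [rho2, sigmaA_apply, eps]

lemma QQ_sigmaA (w : (Fin 4 ⊕ Fin 4) → ℝ) : QQ (sigmaA w) = -QQ w := by
  simp [QQ, sigmaA_apply, eps]; ring

lemma Gamma4_sigmaA (m E : ℝ) (w : (Fin 4 ⊕ Fin 4) → ℝ) :
    Gamma4 m E (sigmaA w) = Gamma4 m E w := by
  have e0 : sigmaA w (Sum.inr 0) = w (Sum.inr 0) := by simp [sigmaA_apply, eps]
  have e1 : (sigmaA w (Sum.inr 1)) ^ 2 = (w (Sum.inr 1)) ^ 2 := by
    rw [sigmaA_apply]; simp [eps]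
  have e2 : (sigmaA w (Sum.inr 2)) ^ 2 = (w (Sum.inr 2)) ^ 2 := by
    rw [sigmaA_apply]; simp [eps]
  have e3 : sigmaA w (Sum.inr 3) = w (Sum.inr 3) := by simp [sigmaA_apply, eps]
  have h1 : rho1 w ^ 2 + rho2 w ^ 2 - 4 * (-QQ w) = rho1 w ^ 2 + rho2 w ^ 2 + 4 * QQ w := by
    ring
  have h2 : rho1 w ^ 2 + rho2 w ^ 2 + 4 * (-QQ w) = rho1 w ^ 2 + rho2 w ^ 2 - 4 * QQ w := by
    ring
  simp only [Gamma4, rho1_sigmaA, rho2_sigmaA, QQ_sigmaA, e0, e1, e2, e3, h1, h2]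
  ring

lemma diff_inv_sqrt (g : ((Fin 4 ⊕ Fin 4) → ℝ) → ℝ) (z : (Fin 4 ⊕ Fin 4) → ℝ)
    (hg : DifferentiableAt ℝ g z) (h : 0 < g z) :
    DifferentiableAt ℝ (fun w => 1 / Real.sqrt (g w)) z := by
  have h1 : DifferentiableAt ℝ (fun w => Real.sqrt (g w)) z :=
    hg.sqrt (ne_of_gt h)
  have h2 := h1.inv (Real.sqrt_pos.mpr h).ne'
  simp only [one_div]
  exact h2

/-- On the set `𝒜 = {Q₂ = Q₃ = P₂ = P₃ = 0}` (with `Q₁ ≠ 0` or `Q₄ ≠ 0`), the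
partial derivatives `∂Γ/∂P₂`, `∂Γ/∂P₃`, `∂Γ/∂Q₂`, `∂Γ/∂Q₃` vanish, hence the
components of the Hamiltonian vector field `J∇Γ` in the `Q₂, Q₃, P₂, P₃`
directions vanish on `𝒜`, so `𝒜` is invariant under the regularized flow. -/
theorem A_invariant (m E : ℝ) (hm : 0 < m) (z : (Fin 4 ⊕ Fin 4) → ℝ)
    (hQ2 : z (Sum.inl 1) = 0) (hQ3 : z (Sum.inl 2) = 0)
    (hP2 : z (Sum.inr 1) = 0) (hP3 : z (Sum.inr 2) = 0)
    (hz : z (Sum.inl 0) ≠ 0 ∨ z (Sum.inl 3) ≠ 0) :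
    (fderiv ℝ (Gamma4 m E) z (Pi.single (Sum.inr 1) 1) = 0 ∧
     fderiv ℝ (Gamma4 m E) z (Pi.single (Sum.inr 2) 1) = 0 ∧
     fderiv ℝ (Gamma4 m E) z (Pi.single (Sum.inl 1) 1) = 0 ∧
     fderiv ℝ (Gamma4 m E) z (Pi.single (Sum.inl 2) 1) = 0) ∧
    ((Jmat 4).mulVec (grad (Gamma4 m E) z) (Sum.inl 1) = 0 ∧
     (Jmat 4).mulVec (grad (Gamma4 m E) z) (Sum.inl 2) = 0 ∧
     (Jmat 4).mulVec (grad (Gamma4 m E) z) (Sum.inr 1) = 0 ∧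
     (Jmat 4).mulVec (grad (Gamma4 m E) z) (Sum.inr 2) = 0) := by
  -- positivity of the square-root arguments
  have hQQz : QQ z = 0 := by simp [QQ, hQ2, hQ3]
  have hupos : 0 < rho1 z ^ 2 + rho2 z ^ 2 := by
    rcases hz with h | h
    · have h1 : 0 < rho1 z := by
        have := h
        simp only [rho1, hQ2]
        positivity
      have : 0 < rho1 z ^ 2 := pow_pos h1 2
      nlinarith [sq_nonneg (rho2 z)]
    · have h1 : 0 < rho2 z := by
        have := h
        simp only [rho2, hQ3]
        positivity
      have : 0 < rho2 z ^ 2 := pow_pos h1 2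
      nlinarith [sq_nonneg (rho1 z)]
  -- differentiability of Gamma4 at z
  have hρ1 : DifferentiableAt ℝ rho1 z := by unfold rho1; fun_prop
  have hρ2 : DifferentiableAt ℝ rho2 z := by unfold rho2; fun_prop
  have hQQd : DifferentiableAt ℝ QQ z := by unfold QQ; fun_prop
  have harg1 : DifferentiableAt ℝ (fun w => rho1 w ^ 2 + rho2 w ^ 2 - 4 * QQ w) z :=
    ((hρ1.pow 2).add (hρ2.pow 2)).sub (hQQd.const_mul 4)
  have harg2 : DifferentiableAt ℝ (fun w => rho1 w ^ 2 + rho2 w ^ 2 + 4 * QQ w) z :=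
    ((hρ1.pow 2).add (hρ2.pow 2)).add (hQQd.const_mul 4)
  have hv1 : (0:ℝ) < rho1 z ^ 2 + rho2 z ^ 2 - 4 * QQ z := by rw [hQQz]; linarith
  have hv2 : (0:ℝ) < rho1 z ^ 2 + rho2 z ^ 2 + 4 * QQ z := by rw [hQQz]; linarith
  have hs1 := diff_inv_sqrt _ z harg1 hv1
  have hs2 := diff_inv_sqrt _ z harg2 hv2
  have hd : DifferentiableAt ℝ (Gamma4 m E) z := by
    have hA : DifferentiableAt ℝ (fun w =>
        (rho2 w / 16) * ((w (Sum.inr 0)) ^ 2 + (w (Sum.inr 1)) ^ 2)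
          + (rho1 w / (16 * m)) * ((w (Sum.inr 2)) ^ 2 + (w (Sum.inr 3)) ^ 2)
          - rho2 w / 2 - m ^ 2 * rho1 w / 2) z := by
      have p1 : DifferentiableAt ℝ (fun w : (Fin 4 ⊕ Fin 4) → ℝ =>
          (w (Sum.inr 0)) ^ 2 + (w (Sum.inr 1)) ^ 2) z := by fun_prop
      have p2 : DifferentiableAt ℝ (fun w : (Fin 4 ⊕ Fin 4) → ℝ =>
          (w (Sum.inr 2)) ^ 2 + (w (Sum.inr 3)) ^ 2) z := by fun_prop
      have q1 : DifferentiableAt ℝ (fun w => rho2 w / 16) z :=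
        by simp only [div_eq_mul_inv]; exact hρ2.mul_const _
      have q2 : DifferentiableAt ℝ (fun w => rho1 w / (16 * m)) z :=
        by simp only [div_eq_mul_inv]; exact hρ1.mul_const _
      have q3 : DifferentiableAt ℝ (fun w => rho2 w / 2) z :=
        by simp only [div_eq_mul_inv]; exact hρ2.mul_const _
      have q4 : DifferentiableAt ℝ (fun w => m ^ 2 * rho1 w / 2) z :=
        by simp only [div_eq_mul_inv]; exact (hρ1.const_mul (m ^ 2)).mul_const _
      exact (((q1.mul p1).add (q2.mul p2)).sub q3).sub q4
    have hB : DifferentiableAt ℝ (fun w =>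
        2 * m * rho1 w * rho2 w *
          (1 / Real.sqrt (rho1 w ^ 2 + rho2 w ^ 2 - 4 * QQ w)
            + 1 / Real.sqrt (rho1 w ^ 2 + rho2 w ^ 2 + 4 * QQ w))) z :=
      ((hρ1.const_mul (2 * m)).mul hρ2).mul (hs1.add hs2)
    have hC : DifferentiableAt ℝ (fun w => E * rho1 w * rho2 w) z :=
      (hρ1.const_mul E).mul hρ2
    exact (hA.sub hB).sub hC
  -- z is fixed by sigmaA
  have hσz : sigmaA z = z := by
    funext i
    rw [sigmaA_apply]
    rcases i with j | j <;> fin_cases j <;>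
      simp [eps, hQ2, hQ3, hP2, hP3]
  -- chain rule via the symmetry
  have hfun : Gamma4 m E ∘ ⇑sigmaA = Gamma4 m E := funext fun w => Gamma4_sigmaA m E w
  have hcomp : fderiv ℝ (Gamma4 m E) z
      = (fderiv ℝ (Gamma4 m E) z).comp (sigmaA : _ →L[ℝ] _) := by
    conv_lhs => rw [← hfun]
    rw [fderiv_comp z (by rwa [hσz]) sigmaA.differentiableAt, hσz,
      sigmaA.fderiv]
  have key : ∀ i : Fin 4 ⊕ Fin 4, eps i = -1 →
      fderiv ℝ (Gamma4 m E) z (Pi.single i 1) = 0 := by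
    intro i hi
    have hσe : sigmaA (Pi.single i 1) = -Pi.single i 1 := by
      funext j
      rw [sigmaA_apply]
      by_cases h : j = i
      · subst h; simp [hi]
      · simp [Pi.single_eq_of_ne h]
    have h1 : fderiv ℝ (Gamma4 m E) z (Pi.single i 1)
        = -fderiv ℝ (Gamma4 m E) z (Pi.single i 1) := by
      conv_lhs => rw [hcomp]
      rw [ContinuousLinearMap.comp_apply, hσe, map_neg]
    linarith
  have k1 := key (Sum.inr 1) (by simp [eps])
  have k2 := key (Sum.inr 2) (by simp [eps])
  have k3 := key (Sum.inl 1) (by simp [eps])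
  have k4 := key (Sum.inl 2) (by simp [eps])
  refine ⟨⟨k1, k2, k3, k4⟩, ?_, ?_, ?_, ?_⟩ <;>
  · simp only [Jmat, Matrix.mulVec, dotProduct, Fintype.sum_sum_type,
      Matrix.fromBlocks, Fin.sum_univ_four, Matrix.one_apply, grad]
    simp [k1, k2, k3, k4, Matrix.one_apply, Matrix.fromBlocks]
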